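/- Let f be a holomorphic function from the open unit disk D to the closed unit disk, realized as f(z) = A + zB(I - zD)^{-1}C for all z in D, where V = [[A,B],[C,D]] : C ⊕ H → C ⊕ H is a unitary operator on C ⊕ H for some Hilbert space H. Then for every λ in D, f(λ) = 0 if and only if λ is an eigenvalue of D*. -/

import Mathlib

open ContinuousLinearMap

/-- Zeros of a Schur function on the disk, given by a unitary realization
`f(z) = A + zB(I - zD)⁻¹C`, are exactly the eigenvalues of `D*` inside the disk. -/
theorem stmt0 {H : Type*} [NormedAddCommGroup H] [InnerProductSpace ℂ H] [CompleteSpace H]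
    (A : ℂ) (B : H →L[ℂ] ℂ) (C : ℂ →L[ℂ] H) (D : H →L[ℂ] H)
    -- V*V = I on ℂ ⊕ H
    (h1 : star A * A + adjoint C (C 1) = 1)
    (h2 : ∀ h : H, star A * B h + adjoint C (D h) = 0)
    (h3 : adjoint B A + adjoint D (C 1) = 0)
    (h4 : ∀ h : H, adjoint B (B h) + adjoint D (D h) = h)
    -- V V* = I on ℂ ⊕ H
    (h5 : A * star A + B (adjoint B 1) = 1)
    (h6 : ∀ v : H, A * adjoint C v + B (adjoint D v) = 0)
    (h7 : C (star A) + D (adjoint B 1) = 0)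
    (h8 : ∀ v : H, C (adjoint C v) + D (adjoint D v) = v)
    (f : ℂ → ℂ)
    (hf : ∀ z : ℂ, f z = A + z * B (Ring.inverse (1 - z • D) (C 1))) :
    ∀ lam ∈ Metric.ball (0 : ℂ) 1,
      (f lam = 0 ↔ ∃ v : H, v ≠ 0 ∧ adjoint D v = lam • v) := by
  -- scalar identifications
  have hCadj : ∀ v : H, adjoint C v = (inner ℂ (C 1) v : ℂ) := by
    intro v
    have : (inner ℂ (1 : ℂ) (adjoint C v) : ℂ) = inner ℂ (C 1) v :=
      adjoint_inner_right C 1 v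
    simpa [RCLike.inner_apply] using this
  -- norm estimate for D
  have hnormsq : ∀ h : H, ‖B h‖ ^ 2 + ‖D h‖ ^ 2 = ‖h‖ ^ 2 := by
    intro h
    have h' : (inner ℂ h (adjoint B (B h)) : ℂ) + inner ℂ h (adjoint D (D h)) = inner ℂ h h := by
      rw [← inner_add_right, h4 h]
    rw [adjoint_inner_right, adjoint_inner_right, inner_self_eq_norm_sq_to_K,
      inner_self_eq_norm_sq_to_K, inner_self_eq_norm_sq_to_K] at h'
    exact_mod_cast h'
  have hnorm : ∀ h : H, ‖D h‖ ≤ ‖h‖ := by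
    intro h
    nlinarith [hnormsq h, norm_nonneg (B h), norm_nonneg (D h), norm_nonneg h]
  intro lam hlam
  rw [Metric.mem_ball, dist_zero_right] at hlam
  have hDop : ‖D‖ ≤ 1 := D.opNorm_le_bound zero_le_one (by simpa using hnorm)
  have hlt : ‖lam • D‖ < 1 := by
    rw [norm_smul]
    calc ‖lam‖ * ‖D‖ ≤ ‖lam‖ * 1 := by gcongr
      _ < 1 := by simpa using hlam
  have hIsUnit : IsUnit (1 - lam • D) := by
    have := (Units.oneSub (lam • D) hlt).isUnit
    rwa [Units.val_oneSub] at this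
  set Q : H →L[ℂ] H := Ring.inverse (1 - lam • D) with hQdef
  have hQ1 : ∀ x : H, Q x - lam • D (Q x) = x := by
    intro x
    have h0 : ((1 - lam • D) * Q) x = (1 : H →L[ℂ] H) x :=
      congrFun (congrArg DFunLike.coe (Ring.mul_inverse_cancel _ hIsUnit)) x
    simpa [ContinuousLinearMap.mul_apply, sub_apply, smul_apply, one_apply] using h0
  have hQ2 : ∀ x : H, Q (x - lam • D x) = x := by
    intro x
    have h0 : (Q * (1 - lam • D)) x = (1 : H →L[ℂ] H) x :=
      congrFun (congrArg DFunLike.coe (Ring.inverse_mul_cancel _ hIsUnit)) x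
    simpa [ContinuousLinearMap.mul_apply, sub_apply, smul_apply, one_apply] using h0
  set w : H := Q (C 1) with hwdef
  have hflam : f lam = A + lam * B w := hf lam
  -- (1 - lam • D) w = C 1
  have hw : w - lam • D w = C 1 := hQ1 (C 1)
  -- adjoint D (C 1) = -(A • adjoint B 1)
  have h3' : adjoint D (C 1) = -(A • adjoint B 1) := by
    have hBA : adjoint B A = A • adjoint B 1 := by
      rw [← map_smul, smul_eq_mul, mul_one]
    rw [← hBA]
    exact eq_neg_of_add_eq_zero_right h3
  constructor
  · -- f lam = 0 → eigenvector
    intro hf0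
    have hA : A + lam * B w = 0 := by rw [← hflam]; exact hf0
    refine ⟨w, ?_, ?_⟩
    · -- w ≠ 0
      intro hw0
      rw [hw0] at hw
      have hC1 : C 1 = 0 := by simpa using hw.symm
      rw [hw0] at hA
      simp at hA
      rw [hA, hC1] at h1
      simp at h1
    · -- adjoint D w = lam • w
      have h4w : adjoint D (D w) = w - (B w) • adjoint B 1 := by
        have hBB : adjoint B (B w) = (B w) • adjoint B 1 := by
          rw [← map_smul, smul_eq_mul, mul_one]
        rw [← hBB]
        exact eq_sub_of_add_eq' (h4 w)
      have hsplit : adjoint D w = adjoint D (C 1) + lam • adjoint D (D w) := by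
        have hwe : w = C 1 + lam • D w := by rw [← hw]; abel
        conv_lhs => rw [hwe]
        rw [map_add, map_smul]
      rw [h3', h4w] at hsplit
      rw [hsplit, smul_sub, smul_smul]
      have hlb : lam * B w = -A := by linear_combination hA
      rw [hlb]
      module
  · -- eigenvector → f lam = 0
    rintro ⟨v, hv0, hDv⟩
    set c : ℂ := inner ℂ (C 1) v with hc
    have hCc : C c = c • C 1 := by rw [← map_smul, smul_eq_mul, mul_one]
    have h8v : c • C 1 + lam • D v = v := by
      have h0 := h8 v
      rw [hCadj v, hDv, map_smul, ← hc, hCc] at h0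
      exact h0
    have hne : c ≠ 0 := by
      intro hc0
      rw [hc0, zero_smul, zero_add] at h8v
      have hDvn : ‖D v‖ ≤ ‖v‖ := hnorm v
      have hveq : ‖v‖ = ‖lam‖ * ‖D v‖ := by
        conv_lhs => rw [← h8v]
        rw [norm_smul]
      have hvpos : 0 < ‖v‖ := norm_pos_iff.mpr hv0
      have hcontra : ‖v‖ < ‖v‖ :=
        calc ‖v‖ = ‖lam‖ * ‖D v‖ := hveq
          _ ≤ ‖lam‖ * ‖v‖ := mul_le_mul_of_nonneg_left hDvn (norm_nonneg lam)
          _ < 1 * ‖v‖ := mul_lt_mul_of_pos_right hlam hvpos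
          _ = ‖v‖ := one_mul _
      exact lt_irrefl _ hcontra
    -- v = c • w
    have hvw : v = c • w := by
      have h0 : Q (v - lam • D v) = v := hQ2 v
      have hsub : v - lam • D v = c • C 1 := sub_eq_of_eq_add h8v.symm
      rw [hsub, map_smul] at h0
      exact h0.symm
    have h6v : A * c + lam * B v = 0 := by
      have h0 := h6 v
      rw [hCadj v, hDv, map_smul, smul_eq_mul, ← hc] at h0
      exact h0
    have hfc : f lam * c = 0 := by
      rw [hflam]
      have hBv : B v = c * B w := by rw [hvw, map_smul, smul_eq_mul]
      rw [hBv] at h6v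
      linear_combination h6v
    rcases mul_eq_zero.mp hfc with h | h
    · exact h
    · exact absurd h hne
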